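/- Let α > 0, let f ∈ L¹[−π,π] with f ≥ 0, let b ∈ (−π,0) ∪ (0,π), let f_H be the polarization of f with respect to b, and let u_f and u_{f_H} be the solutions of the Robin problem with heat sources f and f_H respectively. Set I = [b,π] if b > 0 and I = [−π,b] if b < 0. Then for every x ∈ I, writing x' = 2b − x, one has u_f(x) ≤ u_{f_H}(x'). -/

import Mathlib

open MeasureTheory Real Set

/-- The constant `c_α = α/(1+απ)`. -/
noncomputable def cA (α : ℝ) : ℝ := α / (1 + α * π)

/-- The Green's function of the Robin problem on `[-π, π]`. -/
noncomputable def robinGreen (α x y : ℝ) : ℝ :=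
  -(1/2) * cA α * x * y - (1/2) * |x - y| + 1 / (2 * cA α)

/-- The solution of the Robin problem with heat source `f`. -/
noncomputable def robinSol (α : ℝ) (f : ℝ → ℝ) (x : ℝ) : ℝ :=
  ∫ y in (-π)..π, robinGreen α x y * f y

/-- The polarization (towards zero) of `f : [-π,π] → ℝ` with respect to `b`. -/
noncomputable def polar (b : ℝ) (f : ℝ → ℝ) (x : ℝ) : ℝ :=
  if 0 < b then
    if x < 2 * b - π then f x
    else if x ≤ b then max (f x) (f (2 * b - x))
    else min (f x) (f (2 * b - x))
  else
    if x ≤ b then min (f x) (f (2 * b - x))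
    else if x ≤ 2 * b + π then max (f x) (f (2 * b - x))
    else f x

section Aux

variable {α b x y : ℝ}

lemma cA_pos (hα : 0 < α) : 0 < cA α := by
  have hπ := Real.pi_pos
  exact div_pos hα (by nlinarith)

lemma cA_pi_lt_one (hα : 0 < α) : cA α * π < 1 := by
  have hπ := Real.pi_pos
  have h1 : (0:ℝ) < 1 + α * π := by nlinarith
  rw [cA, div_mul_eq_mul_div, div_lt_one h1]
  linarith

lemma robinGreen_nonneg (hα : 0 < α) (hx : x ∈ Icc (-π) π) (hy : y ∈ Icc (-π) π) :
    0 ≤ robinGreen α x y := by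
  have hc := cA_pos hα
  have hcπ := cA_pi_lt_one hα
  obtain ⟨hx1, hx2⟩ := hx
  obtain ⟨hy1, hy2⟩ := hy
  have hinv : cA α * (1 / (2 * cA α)) = 1/2 := by field_simp
  rw [robinGreen]
  rcases abs_cases (x - y) with ⟨h1, h2⟩ | ⟨h1, h2⟩ <;> rw [h1]
  · have hxc : cA α * x ≤ cA α * π := by nlinarith
    have hyc : cA α * (-π) ≤ cA α * y := by nlinarith
    have h3 : 0 ≤ (1 - cA α * x) * (1 + cA α * y) := by nlinarith
    nlinarith
  · have hxc : cA α * (-π) ≤ cA α * x := by nlinarith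
    have hyc : cA α * y ≤ cA α * π := by nlinarith
    have h3 : 0 ≤ (1 + cA α * x) * (1 - cA α * y) := by nlinarith
    nlinarith

/-- `G(x,y) ≤ G(2b-x, y)` for `y ≤ b ≤ x ≤ π`, `y ≥ -π`, `0 < b`. -/
lemma robinGreen_le_reflect (hα : 0 < α) (hb : 0 < b) (hbx : b ≤ x) (hxπ : x ≤ π)
    (hy1 : -π ≤ y) (hyb : y ≤ b) :
    robinGreen α x y ≤ robinGreen α (2*b - x) y := by
  have hc := cA_pos hα
  have hcπ := cA_pi_lt_one hα
  have hπ := Real.pi_pos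
  rw [robinGreen, robinGreen, abs_of_nonneg (by linarith : (0:ℝ) ≤ x - y)]
  rcases abs_cases (2*b - x - y) with ⟨h1, h2⟩ | ⟨h1, h2⟩ <;> rw [h1]
  · -- y ≤ 2b - x : reduces to (x - b)(1 + c y) ≥ 0
    have hcy : 0 ≤ 1 + cA α * y := by nlinarith
    nlinarith [mul_nonneg (sub_nonneg.2 hbx) hcy]
  · -- y ≥ 2b - x : reduces to c y (x-b) + (b-y) ≥ 0
    rcases le_or_gt 0 y with hy0 | hy0
    · nlinarith [mul_nonneg (mul_nonneg hc.le hy0) (sub_nonneg.2 hbx)]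
    · nlinarith [mul_nonneg (mul_nonneg hc.le (neg_nonneg.2 hy0.le))
        (by linarith : (0:ℝ) ≤ π - (x - b)),
        mul_pos (neg_pos.2 hy0) (by linarith : (0:ℝ) < 1 - cA α * π)]

/-- `G(x, 2b-y) ≤ G(2b-x, y)` for `y ≤ x`, `0 ≤ b`. -/
lemma robinGreen_cross (hα : 0 < α) (hb : 0 ≤ b) (hyx : y ≤ x) :
    robinGreen α x (2*b - y) ≤ robinGreen α (2*b - x) y := by
  have hc := cA_pos hα
  rw [robinGreen, robinGreen, show x - (2*b - y) = -(2*b - x - y) by ring, abs_neg]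
  nlinarith [mul_nonneg (mul_nonneg hc.le hb) (sub_nonneg.2 hyx)]

/-- `G(x,y) + G(x,2b-y) ≤ G(2b-x,y) + G(2b-x,2b-y)` for `b ≤ x`, `0 ≤ b`. -/
lemma robinGreen_sum (hα : 0 < α) (hb : 0 ≤ b) (hbx : b ≤ x) :
    robinGreen α x y + robinGreen α x (2*b - y) ≤
      robinGreen α (2*b - x) y + robinGreen α (2*b - x) (2*b - y) := by
  have hc := cA_pos hα
  rw [robinGreen, robinGreen, robinGreen, robinGreen,
    show x - (2*b - y) = -(2*b - x - y) by ring, abs_neg,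
    show 2*b - x - (2*b - y) = -(x - y) by ring, abs_neg]
  nlinarith [mul_nonneg (mul_nonneg hc.le hb) (sub_nonneg.2 hbx)]

/-- The key pointwise pairing inequality. -/
lemma pair_ineq (hα : 0 < α) (f : ℝ → ℝ) (hb : 0 < b) (hbx : b ≤ x) (hxπ : x ≤ π)
    (hy1 : 2*b - π ≤ y) (hyb : y ≤ b) (hfy : 0 ≤ f y) (hfσ : 0 ≤ f (2*b - y)) :
    robinGreen α x y * f y + robinGreen α x (2*b - y) * f (2*b - y) ≤
      robinGreen α (2*b - x) y * max (f y) (f (2*b - y)) +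
        robinGreen α (2*b - x) (2*b - y) * min (f y) (f (2*b - y)) := by
  have hπ := Real.pi_pos
  have hS := robinGreen_sum (b := b) (x := x) (y := y) hα hb.le hbx
  rcases le_total (f (2*b - y)) (f y) with h | h
  · rw [max_eq_left h, min_eq_right h]
    have hA := robinGreen_le_reflect hα hb hbx hxπ (by linarith) hyb
    nlinarith [mul_nonneg (sub_nonneg.2 hA) (sub_nonneg.2 h),
      mul_nonneg (by linarith : (0:ℝ) ≤ robinGreen α (2*b - x) y +
        robinGreen α (2*b - x) (2*b - y) - robinGreen α x y - robinGreen α x (2*b - y))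
        hfσ]
  · rw [max_eq_right h, min_eq_left h]
    have hA := robinGreen_cross (b := b) (x := x) (y := y) hα hb.le (by linarith)
    nlinarith [mul_nonneg (sub_nonneg.2 hA) (sub_nonneg.2 h),
      mul_nonneg (by linarith : (0:ℝ) ≤ robinGreen α (2*b - x) y +
        robinGreen α (2*b - x) (2*b - y) - robinGreen α x y - robinGreen α x (2*b - y))
        hfy]

lemma robinGreen_neg_neg : robinGreen α (-x) (-y) = robinGreen α x y := by
  rw [robinGreen, robinGreen, show -x - -y = -(x - y) by ring, abs_neg]
  ring

lemma robinGreen_continuous : Continuous fun y => robinGreen α x y := by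
  unfold robinGreen
  fun_prop

lemma robinSol_comp_neg (h : ℝ → ℝ) :
    robinSol α (fun t => h (-t)) (-x) = robinSol α h x := by
  rw [robinSol, robinSol]
  have h2 := intervalIntegral.integral_comp_neg (a := -π) (b := π)
    (f := fun z => robinGreen α (-x) (-z) * h z)
  simp only [neg_neg] at h2
  rw [h2]
  refine intervalIntegral.integral_congr fun y _ => ?_
  simp only [robinGreen_neg_neg]

lemma polar_neg (hb1 : -π < b) (hb : b < 0) (f : ℝ → ℝ) (t : ℝ) :
    polar b f t = polar (-b) (fun s => f (-s)) (-t) := by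
  simp only [polar, neg_neg, show -(2 * -b - -t) = 2*b - t by ring]
  have hπ := Real.pi_pos
  rw [if_neg (by push_neg; linarith : ¬ (0:ℝ) < b), if_pos (by linarith : (0:ℝ) < -b)]
  split_ifs with h1 h2 h3 h4 h5 <;>
    first
      | rfl
      | (exfalso; linarith)
      | (have hte : t = b := by linarith
         rw [hte, show 2*b - b = b by ring]
         simp)

end Aux

set_option maxHeartbeats 2000000 in
/-- The main inequality for `b > 0`. -/
lemma key_pos (α : ℝ) (hα : 0 < α) (f : ℝ → ℝ) (hf : IntegrableOn f (Icc (-π) π))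
    (hf0 : ∀ x ∈ Icc (-π) π, 0 ≤ f x) (b : ℝ) (hb : 0 < b) (hbπ : b < π) :
    ∀ x ∈ Icc b π, robinSol α f x ≤ robinSol α (polar b f) (2 * b - x) := by
  have hπ := Real.pi_pos
  intro x hx
  obtain ⟨hbx, hxπ⟩ := hx
  -- basic interval integrability of f on subintervals
  have hsub : ∀ a' b' : ℝ, -π ≤ a' → b' ≤ π → a' ≤ b' → IntervalIntegrable f volume a' b' :=
    fun a' b' h1 h2 h3 => (intervalIntegrable_iff_integrableOn_Icc_of_le h3).2
      (hf.mono_set (Icc_subset_Icc h1 h2))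
  have hmb : 2*b - π ≤ b := by linarith
  have hfmid : IntervalIntegrable f volume (2*b - π) b := hsub _ _ (by linarith) (by linarith) hmb
  have hfhi : IntervalIntegrable f volume b π := hsub _ _ (by linarith) le_rfl hbπ.le
  have hflo : IntervalIntegrable f volume (-π) (2*b - π) :=
    hsub _ _ le_rfl (by linarith) (by linarith)
  -- reflection helper
  have refl_mid : ∀ g : ℝ → ℝ, IntervalIntegrable g volume b π →
      IntervalIntegrable (fun y => g (2*b - y)) volume (2*b - π) b := by
    intro g hg
    have h := hg.comp_sub_left (2*b)
    rw [show 2*b - b = b by ring] at h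
    exact h.symm
  have refl_hi : ∀ g : ℝ → ℝ, IntervalIntegrable g volume (2*b - π) b →
      IntervalIntegrable (fun y => g (2*b - y)) volume b π := by
    intro g hg
    have h := hg.comp_sub_left (2*b)
    rw [show 2*b - b = b by ring, show 2*b - (2*b - π) = π by ring] at h
    exact h.symm
  have hfσmid : IntervalIntegrable (fun y => f (2*b - y)) volume (2*b - π) b := refl_mid f hfhi
  have hfσhi : IntervalIntegrable (fun y => f (2*b - y)) volume b π := refl_hi f hfmid
  -- polar description on the three intervals
  have hpolar_mid_eq : EqOn (polar b f) (fun y => max (f y) (f (2*b - y))) (Icc (2*b - π) b) := by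
    intro y hy
    simp only [polar, if_pos hb]
    rw [if_neg (not_lt.2 hy.1), if_pos hy.2]
  have hpolar_hi_eq : EqOn (polar b f) (fun y => min (f y) (f (2*b - y))) (Icc b π) := by
    intro y hy
    rcases eq_or_lt_of_le hy.1 with h | h
    · subst h
      simp only [polar, if_pos hb]
      rw [if_neg (not_lt.2 (by linarith)), if_pos le_rfl, show 2*b - b = b by ring]
      simp
    · simp only [polar, if_pos hb]
      rw [if_neg (not_lt.2 (by linarith)), if_neg (not_le.2 h)]
  have hpolar_lo_eq : EqOn (polar b f) f (Ioo (-π) (2*b - π)) := by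
    intro y hy
    simp only [polar, if_pos hb]
    rw [if_pos hy.2]
  -- interval integrability of polar pieces
  have hpolar_mid : IntervalIntegrable (polar b f) volume (2*b - π) b := by
    rw [intervalIntegrable_iff_integrableOn_Icc_of_le hmb]
    refine IntegrableOn.congr_fun ?_ hpolar_mid_eq.symm measurableSet_Icc
    have h1 := (intervalIntegrable_iff_integrableOn_Icc_of_le hmb).1 hfmid
    have h2 := (intervalIntegrable_iff_integrableOn_Icc_of_le hmb).1 hfσmid
    exact h1.sup h2
  have hpolar_hi : IntervalIntegrable (polar b f) volume b π := by
    rw [intervalIntegrable_iff_integrableOn_Icc_of_le hbπ.le]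
    refine IntegrableOn.congr_fun ?_ hpolar_hi_eq.symm measurableSet_Icc
    have h1 := (intervalIntegrable_iff_integrableOn_Icc_of_le hbπ.le).1 hfhi
    have h2 := (intervalIntegrable_iff_integrableOn_Icc_of_le hbπ.le).1 hfσhi
    exact h1.inf h2
  have hpolar_lo : IntervalIntegrable (polar b f) volume (-π) (2*b - π) := by
    rw [intervalIntegrable_iff_integrableOn_Ioo_of_le (by linarith)]
    refine IntegrableOn.congr_fun ?_ hpolar_lo_eq.symm measurableSet_Ioo
    exact ((intervalIntegrable_iff_integrableOn_Ioo_of_le (by linarith : -π ≤ 2*b - π)).1 hflo)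
  set x' := 2*b - x with hx'
  have hF1lo : IntervalIntegrable (fun y => robinGreen α x y * f y) volume (-π) (2*b - π) :=
    hflo.continuousOn_mul robinGreen_continuous.continuousOn
  have hF1mid : IntervalIntegrable (fun y => robinGreen α x y * f y) volume (2*b - π) b :=
    hfmid.continuousOn_mul robinGreen_continuous.continuousOn
  have hF1hi : IntervalIntegrable (fun y => robinGreen α x y * f y) volume b π :=
    hfhi.continuousOn_mul robinGreen_continuous.continuousOn
  have hF2lo : IntervalIntegrable (fun y => robinGreen α x' y * polar b f y) volume (-π) (2*b - π) :=
    hpolar_lo.continuousOn_mul robinGreen_continuous.continuousOn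
  have hF2mid : IntervalIntegrable (fun y => robinGreen α x' y * polar b f y) volume (2*b - π) b :=
    hpolar_mid.continuousOn_mul robinGreen_continuous.continuousOn
  have hF2hi : IntervalIntegrable (fun y => robinGreen α x' y * polar b f y) volume b π :=
    hpolar_hi.continuousOn_mul robinGreen_continuous.continuousOn
  have hF1smid : IntervalIntegrable (fun y => robinGreen α x (2*b - y) * f (2*b - y))
      volume (2*b - π) b := refl_mid (fun y => robinGreen α x y * f y) hF1hi
  have hF2smid : IntervalIntegrable (fun y => robinGreen α x' (2*b - y) * polar b f (2*b - y))
      volume (2*b - π) b := refl_mid (fun y => robinGreen α x' y * polar b f y) hF2hi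
  -- reflection of integrals
  have hrefl : ∀ g : ℝ → ℝ, (∫ y in b..π, g y) = ∫ y in (2*b - π)..b, g (2*b - y) := by
    intro g
    have h := intervalIntegral.integral_comp_sub_left (a := 2*b - π) (b := b) g (2*b)
    rw [show 2*b - b = b by ring, show 2*b - (2*b - π) = π by ring] at h
    exact h.symm
  -- lower region inequality
  have hlo : (∫ y in (-π)..(2*b - π), robinGreen α x y * f y) ≤
      ∫ y in (-π)..(2*b - π), robinGreen α x' y * polar b f y := by
    apply intervalIntegral.integral_mono_on (by linarith) hF1lo hF2lo
    intro y hy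
    have hy1 : -π ≤ y := hy.1
    have hy2 : y ≤ 2*b - π := hy.2
    have hfy := hf0 y ⟨hy1, by linarith⟩
    have hA := robinGreen_le_reflect hα hb hbx hxπ hy1 (by linarith)
    have hG0 : 0 ≤ robinGreen α x' y :=
      robinGreen_nonneg hα ⟨by simp only [hx']; linarith, by simp only [hx']; linarith⟩
        ⟨hy1, by linarith⟩
    have hpge : f y ≤ polar b f y := by
      simp only [polar, if_pos hb]
      split_ifs with h1 h2
      · exact le_rfl
      · exact le_max_left _ _
      · exact absurd (by linarith : y ≤ b) h2
    calc robinGreen α x y * f y ≤ robinGreen α x' y * f y :=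
          mul_le_mul_of_nonneg_right hA hfy
      _ ≤ robinGreen α x' y * polar b f y := mul_le_mul_of_nonneg_left hpge hG0
  -- middle+upper region inequality after pairing
  have hmidhi : (∫ y in (2*b - π)..b,
        (robinGreen α x y * f y + robinGreen α x (2*b - y) * f (2*b - y))) ≤
      ∫ y in (2*b - π)..b,
        (robinGreen α x' y * polar b f y + robinGreen α x' (2*b - y) * polar b f (2*b - y)) := by
    apply intervalIntegral.integral_mono_on hmb (hF1mid.add hF1smid) (hF2mid.add hF2smid)
    intro y hy
    have hσ : 2*b - y ∈ Icc b π := ⟨by linarith [hy.2], by linarith [hy.1]⟩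
    rw [hpolar_mid_eq hy, hpolar_hi_eq hσ]
    have hp := pair_ineq hα f hb hbx hxπ hy.1 hy.2
      (hf0 y ⟨by linarith [hy.1], by linarith [hy.2]⟩) (hf0 _ ⟨by linarith [hσ.1], hσ.2⟩)
    simpa [hx', inf_comm] using hp
  -- assemble
  have e1 : robinSol α f x = (∫ y in (-π)..(2*b - π), robinGreen α x y * f y) +
      ((∫ y in (2*b - π)..b, robinGreen α x y * f y) +
        ∫ y in b..π, robinGreen α x y * f y) := by
    rw [robinSol, intervalIntegral.integral_add_adjacent_intervals hF1mid hF1hi,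
      intervalIntegral.integral_add_adjacent_intervals hF1lo (hF1mid.trans hF1hi)]
  have e2 : robinSol α (polar b f) x' = (∫ y in (-π)..(2*b - π), robinGreen α x' y * polar b f y) +
      ((∫ y in (2*b - π)..b, robinGreen α x' y * polar b f y) +
        ∫ y in b..π, robinGreen α x' y * polar b f y) := by
    rw [robinSol, intervalIntegral.integral_add_adjacent_intervals hF2mid hF2hi,
      intervalIntegral.integral_add_adjacent_intervals hF2lo (hF2mid.trans hF2hi)]
  rw [e1, e2]
  refine add_le_add hlo ?_
  rw [hrefl (fun y => robinGreen α x y * f y), hrefl (fun y => robinGreen α x' y * polar b f y),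
    ← intervalIntegral.integral_add hF1mid hF1smid, ← intervalIntegral.integral_add hF2mid hF2smid]
  exact hmidhi

set_option maxHeartbeats 1000000 in
/-- **`u_f(x) ≤ u_{f_H}(x')` for `x` in the far interval `I` and `x' = 2b - x`.** -/
theorem robinSol_le_polar_reflected
    (α : ℝ) (hα : 0 < α)
    (f : ℝ → ℝ) (hf : IntegrableOn f (Icc (-π) π))
    (hf0 : ∀ x ∈ Icc (-π) π, 0 ≤ f x)
    (b : ℝ) (hb : b ∈ Ioo (-π) 0 ∪ Ioo 0 π) :
    ∀ x ∈ (if 0 < b then Icc b π else Icc (-π) b),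
      robinSol α f x ≤ robinSol α (polar b f) (2 * b - x) := by
  have hπ := Real.pi_pos
  rcases hb with hneg | hpos
  · -- b < 0 : reduce to the positive case by reflection
    obtain ⟨hb1, hb2⟩ := hneg
    intro x hx
    rw [if_neg (not_lt.2 hb2.le)] at hx
    obtain ⟨hx1, hx2⟩ := hx
    set g : ℝ → ℝ := fun t => f (-t) with hg
    have hgI : IntegrableOn g (Icc (-π) π) := by
      have h1 : IntervalIntegrable f volume (-π) π :=
        (intervalIntegrable_iff_integrableOn_Icc_of_le (by linarith)).2 hf
      have h2 := (IntervalIntegrable.iff_comp_neg (f := f) (a := -π) (b := π)).mp h1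
      rw [neg_neg] at h2
      exact (intervalIntegrable_iff_integrableOn_Icc_of_le (by linarith)).1 h2.symm
    have hg0 : ∀ t ∈ Icc (-π) π, 0 ≤ g t := fun t ht => hf0 (-t) ⟨by linarith [ht.2], by linarith [ht.1]⟩
    have hkey := key_pos α hα g hgI hg0 (-b) (by linarith) (by linarith) (-x)
      ⟨by linarith, by linarith⟩
    have eL : robinSol α g (-x) = robinSol α f x := robinSol_comp_neg f
    have eR : robinSol α (polar (-b) g) (2 * -b - -x) = robinSol α (polar b f) (2 * b - x) := by
      rw [show 2 * -b - -x = -(2 * b - x) by ring]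
      have h1 : robinSol α (fun t => polar (-b) g (-t)) (-(-(2 * b - x))) =
          robinSol α (polar (-b) g) (-(2 * b - x)) := robinSol_comp_neg (polar (-b) g)
      rw [neg_neg] at h1
      rw [← h1]
      congr 1
      funext t
      exact (polar_neg hb1 hb2 f t).symm
    rw [← eL, ← eR]
    exact hkey
  · intro x hx
    rw [if_pos hpos.1] at hx
    exact key_pos α hα f hf hf0 b hpos.1 hpos.2 x hx
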